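/- For ε1, ε2 ∈ [0,1], let (W⁻, W⁺) be the irregular kernel transform of BEC(ε1) and BEC(ε2). Then Z(W⁻) = ε1 + ε2 − ε1·ε2 and Z(W⁺) = ε1·ε2; in particular, for binary erasure channels the bound Z(W⁻) ≤ Z(W1) + Z(W2) − Z(W1)·Z(W2) holds with equality. -/
import Mathlib


open Finset Real

/-- Bhattacharyya parameter Z(W). -/
noncomputable def bhatt {Y : Type*} [Fintype Y] (W : Y → ZMod 2 → ℝ) : ℝ :=
  ∑ y, Real.sqrt (W y 0 * W y 1)

/-- The minus-channel W⁻ of the irregular kernel transform. -/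
noncomputable def Wminus {Y1 Y2 : Type*} (W1 : Y1 → ZMod 2 → ℝ)
    (W2 : Y2 → ZMod 2 → ℝ) : Y1 × Y2 → ZMod 2 → ℝ :=
  fun y u1 => ∑ u2 : ZMod 2, (1 / 2) * W1 y.1 (u1 + u2) * W2 y.2 u2

/-- The plus-channel W⁺ of the irregular kernel transform. -/
noncomputable def Wplus {Y1 Y2 : Type*} (W1 : Y1 → ZMod 2 → ℝ)
    (W2 : Y2 → ZMod 2 → ℝ) : Y1 × Y2 × ZMod 2 → ZMod 2 → ℝ :=
  fun y u2 => (1 / 2) * W1 y.1 (y.2.2 + u2) * W2 y.2.1 u2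

/-- The binary erasure channel with erasure probability ε. -/
noncomputable def BEC (ε : ℝ) : Option (ZMod 2) → ZMod 2 → ℝ :=
  fun y x => match y with
    | some v => if v = x then 1 - ε else 0
    | none => ε

/-- for BECs, Z(W⁻) = ε1 + ε2 − ε1·ε2, Z(W⁺) = ε1·ε2, and the
bound Z(W⁻) ≤ Z(W1) + Z(W2) − Z(W1)·Z(W2) holds with equality. -/
theorem bhatt_kernel_BEC (ε1 ε2 : ℝ) (h1 : ε1 ∈ Set.Icc (0:ℝ) 1)
    (h2 : ε2 ∈ Set.Icc (0:ℝ) 1) :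
    bhatt (Wminus (BEC ε1) (BEC ε2)) = ε1 + ε2 - ε1 * ε2 ∧
    bhatt (Wplus (BEC ε1) (BEC ε2)) = ε1 * ε2 ∧
    bhatt (Wminus (BEC ε1) (BEC ε2)) =
      bhatt (BEC ε1) + bhatt (BEC ε2) - bhatt (BEC ε1) * bhatt (BEC ε2) := by
  obtain ⟨ha1, hb1⟩ := h1
  obtain ⟨ha2, hb2⟩ := h2
  have hm : bhatt (Wminus (BEC ε1) (BEC ε2)) = ε1 + ε2 - ε1 * ε2 := by
    rw [bhatt, Fintype.sum_prod_type]
    simp only [Fintype.sum_option]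
    rw [show (Finset.univ : Finset (ZMod 2)) = {0, 1} by decide]
    simp only [Wminus, BEC]
    rw [show (Finset.univ : Finset (ZMod 2)) = {0, 1} by decide]
    simp [show (1+1:ZMod 2) = 0 from rfl, show ((0:ZMod 2)) ≠ 1 from by decide,
      show ((1:ZMod 2)) ≠ 0 from by decide]
    rw [Real.sqrt_mul_self (by positivity), Real.sqrt_mul_self (by nlinarith),
      Real.sqrt_mul_self (by nlinarith)]
    ring
  have hp : bhatt (Wplus (BEC ε1) (BEC ε2)) = ε1 * ε2 := by
    rw [bhatt, Fintype.sum_prod_type]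
    simp only [Fintype.sum_prod_type, Fintype.sum_option]
    rw [show (Finset.univ : Finset (ZMod 2)) = {0, 1} by decide]
    simp only [Wplus, BEC]
    simp [show (1+1:ZMod 2) = 0 from rfl, show ((0:ZMod 2)) ≠ 1 from by decide,
      show ((1:ZMod 2)) ≠ 0 from by decide]
    rw [Real.sqrt_mul_self (by positivity)]
    ring
  have hb : ∀ ε : ℝ, 0 ≤ ε → bhatt (BEC ε) = ε := by
    intro ε h
    rw [bhatt, Fintype.sum_option]
    rw [show (Finset.univ : Finset (ZMod 2)) = {0, 1} by decide]
    simp [BEC, Real.sqrt_mul_self h]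
  refine ⟨hm, hp, ?_⟩
  rw [hm, hb ε1 ha1, hb ε2 ha2]
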